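/- Let h : [0,∞) → ℝ be a nonnegative locally integrable function. Suppose there exist nonnegative constants a₁, a₂ such that ∫_{t₀}^{t} h(τ) dτ ≤ a₁ (t − t₀) + a₂ for all t, t₀ with 0 ≤ t₀ ≤ t. Then sup_{t ≥ 0} ( e^{−t} ∫_{0}^{t} e^{τ} h(τ) dτ ) < ∞. -/

import Mathlib

open MeasureTheory Real

/-- Let `h : [0,∞) → ℝ` be a nonnegative locally integrable function. Suppose there exist
nonnegative constants `a₁, a₂` such that `∫_{t₀}^{t} h ≤ a₁ (t − t₀) + a₂` for all
`0 ≤ t₀ ≤ t`. Then `sup_{t ≥ 0} ( e^{−t} ∫_{0}^{t} e^{τ} h(τ) dτ ) < ∞`. -/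
theorem stmt0 (h : ℝ → ℝ) (a₁ a₂ : ℝ)
    (hnonneg : ∀ t, 0 ≤ t → 0 ≤ h t)
    (hint : ∀ t₀ t : ℝ, 0 ≤ t₀ → t₀ ≤ t → IntervalIntegrable h volume t₀ t)
    (ha₁ : 0 ≤ a₁) (ha₂ : 0 ≤ a₂)
    (hbound : ∀ t₀ t : ℝ, 0 ≤ t₀ → t₀ ≤ t →
      (∫ τ in t₀..t, h τ) ≤ a₁ * (t - t₀) + a₂) :
    ∃ C : ℝ, ∀ t : ℝ, 0 ≤ t →
      Real.exp (-t) * ∫ τ in (0 : ℝ)..t, Real.exp τ * h τ ≤ C := by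
  set K : ℝ := 2 * (a₁ + a₂) with hK
  have hKnn : 0 ≤ K := by positivity
  -- integrability of exp * h
  have hIeh : ∀ s t : ℝ, 0 ≤ s → s ≤ t →
      IntervalIntegrable (fun τ => Real.exp τ * h τ) volume s t := by
    intro s t hs hst
    exact (hint s t hs hst).continuousOn_mul Real.continuous_exp.continuousOn
  -- bound on a short piece
  have piece : ∀ s t : ℝ, 0 ≤ s → s ≤ t → t - s ≤ 1 →
      (∫ τ in s..t, Real.exp τ * h τ) ≤ Real.exp t * (a₁ + a₂) := by
    intro s t hs0 hst hts1
    have I2 := hIeh s t hs0 hst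
    have I2' : IntervalIntegrable (fun τ => Real.exp t * h τ) volume s t :=
      (hint s t hs0 hst).const_mul _
    have step1 : (∫ τ in s..t, Real.exp τ * h τ) ≤ ∫ τ in s..t, Real.exp t * h τ := by
      apply intervalIntegral.integral_mono_on hst I2 I2'
      intro x hx
      have hx0 : 0 ≤ x := le_trans hs0 hx.1
      exact mul_le_mul_of_nonneg_right (Real.exp_le_exp.2 hx.2) (hnonneg x hx0)
    have step2 : (∫ τ in s..t, Real.exp t * h τ) = Real.exp t * ∫ τ in s..t, h τ := by
      simp [intervalIntegral.integral_const_mul]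
    have step3 : (∫ τ in s..t, h τ) ≤ a₁ + a₂ := by
      have := hbound s t hs0 hst
      nlinarith
    calc (∫ τ in s..t, Real.exp τ * h τ) ≤ Real.exp t * ∫ τ in s..t, h τ := by
          rw [← step2]; exact step1
      _ ≤ Real.exp t * (a₁ + a₂) := mul_le_mul_of_nonneg_left step3 (Real.exp_pos t).le
  have hexpinv : Real.exp (-1 : ℝ) ≤ 1/2 := by
    rw [Real.exp_neg]
    rw [inv_le_comm₀ (Real.exp_pos 1) (by norm_num)]
    linarith [Real.exp_one_gt_d9]
  have key : ∀ n : ℕ, ∀ t : ℝ, 0 ≤ t → t ≤ n →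
      (∫ τ in (0:ℝ)..t, Real.exp τ * h τ) ≤ K * Real.exp t := by
    intro n
    induction n with
    | zero =>
      intro t ht ht'
      have : t = 0 := le_antisymm (by exact_mod_cast ht') ht
      subst this
      simp [hKnn]
    | succ n ih =>
      intro t ht ht'
      rcases le_or_gt t n with hle | hgt
      · exact ih t ht hle
      rcases le_or_gt t 1 with h1 | h1
      · calc (∫ τ in (0:ℝ)..t, Real.exp τ * h τ)
            ≤ Real.exp t * (a₁ + a₂) := piece 0 t le_rfl ht (by linarith)
          _ ≤ K * Real.exp t := by nlinarith [Real.exp_pos t]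
      · set s : ℝ := t - 1 with hs
        have hs0 : 0 ≤ s := by rw [hs]; linarith
        have hst : s ≤ t := by rw [hs]; linarith
        have hsn : s ≤ n := by
          have : t ≤ (n : ℝ) + 1 := by exact_mod_cast ht'
          rw [hs]; linarith
        have I1 := hIeh 0 s le_rfl hs0
        have I2 := hIeh s t hs0 hst
        have split := intervalIntegral.integral_add_adjacent_intervals I1 I2
        have b1 : (∫ τ in (0:ℝ)..s, Real.exp τ * h τ) ≤ K * Real.exp s := ih s hs0 hsn
        have b2 := piece s t hs0 hst (by rw [hs]; linarith)
        have hes : Real.exp s = Real.exp t * Real.exp (-1) := by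
          rw [← Real.exp_add, hs]; ring_nf
        rw [hes] at b1
        calc (∫ τ in (0:ℝ)..t, Real.exp τ * h τ)
            = (∫ τ in (0:ℝ)..s, Real.exp τ * h τ) + ∫ τ in s..t, Real.exp τ * h τ :=
              split.symm
          _ ≤ K * (Real.exp t * Real.exp (-1)) + Real.exp t * (a₁ + a₂) := add_le_add b1 b2
          _ ≤ K * Real.exp t := by nlinarith [Real.exp_pos t,
              mul_le_mul_of_nonneg_left hexpinv (mul_nonneg hKnn (Real.exp_pos t).le)]
  refine ⟨K, fun t ht => ?_⟩
  obtain ⟨n, hn⟩ := exists_nat_ge t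
  have hkey := key n t ht hn
  have h1 : Real.exp (-t) * (∫ τ in (0:ℝ)..t, Real.exp τ * h τ)
      ≤ Real.exp (-t) * (K * Real.exp t) :=
    mul_le_mul_of_nonneg_left hkey (Real.exp_pos _).le
  have h2 : Real.exp (-t) * (K * Real.exp t) = K := by
    rw [mul_comm (Real.exp (-t)), mul_assoc, ← Real.exp_add]
    simp
  linarith
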